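/- (Absolute and relative attractiveness effects) Let ρ be a reciprocal-differences model with representation (u,λ). For all a, b, c, d ∈ X with u(a) > u(b) and u(c) > u(d), one has ρ(o,{c,d}) > ρ(o,{a,b}) if and only if u(a)² − u(b)² > u(c)² − u(d)². In particular, ρ(o,{c,d}) > ρ(o,{a,b}) holds whenever either (i) u(a) − u(b) > u(c) − u(d) and u(a) + u(b) = u(c) + u(d), or (ii) u(a) + u(b) > u(c) + u(d) and u(a) − u(b) = u(c) − u(d). -/

import Mathlib

open Finset

variable {X : Type*} [Fintype X] [DecidableEq X]

/-- The probability of choosing the outside option (deferring) at menu `A`. -/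
noncomputable def defer (ρ : Finset X → X → ℝ) (A : Finset X) : ℝ :=
  1 - ∑ a ∈ A, ρ A a

/-- `ρ` is a random non-forced choice model on `X`. -/
def IsRNFC (ρ : Finset X → X → ℝ) : Prop :=
  ∀ A : Finset X, A.Nonempty →
    (∀ a ∈ A, 0 ≤ ρ A a ∧ ρ A a ≤ 1) ∧
    (∀ a, a ∉ A → ρ A a = 0) ∧
    (∑ a ∈ A, ρ A a) ≤ 1

/-- `ρ` is a decision-conflict logit with representation `(u, D)`. -/
def IsDCL (ρ : Finset X → X → ℝ) (u : X → ℝ) (D : Finset X → ℝ) : Prop :=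
  (∀ a, 0 < u a) ∧
  (∀ A : Finset X, A.Nonempty → 0 ≤ D A ∧ (D A = 0 ↔ A.card = 1)) ∧
  (∀ A : Finset X, A.Nonempty → ∀ a ∈ A, ρ A a = u a / ((∑ b ∈ A, u b) + D A))

/-- Absolute and relative attractiveness effects in the reciprocal-differences model. -/
theorem stmt19 (ρ : Finset X → X → ℝ)
    (u : X → ℝ) (l : ℝ) (hu : ∀ a, 0 < u a) (hui : Function.Injective u) (hl : 0 < l)
    (h : ∀ a b : X, a ≠ b →
      ρ {a, b} a = u a / (u a + u b + l / |u a - u b|) ∧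
      ρ {a, b} b = u b / (u a + u b + l / |u a - u b|)) :
    ∀ a b c d : X, u a > u b → u c > u d →
      (defer ρ {a, b} < defer ρ {c, d} ↔ u c ^ 2 - u d ^ 2 < u a ^ 2 - u b ^ 2) ∧
      ((u c - u d < u a - u b ∧ u a + u b = u c + u d) → defer ρ {a, b} < defer ρ {c, d}) ∧
      ((u c + u d < u a + u b ∧ u a - u b = u c - u d) → defer ρ {a, b} < defer ρ {c, d}) := by
  have key : ∀ a b : X, u b < u a → defer ρ {a, b} = l / (l + (u a ^ 2 - u b ^ 2)) := by
    intro a b hab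
    have hne : a ≠ b := fun e => by rw [e] at hab; exact lt_irrefl _ hab
    obtain ⟨h1, h2⟩ := h a b hne
    have hΔ : (0:ℝ) < u a - u b := by linarith
    have habs : |u a - u b| = u a - u b := abs_of_pos hΔ
    have hD : 0 < u a + u b + l / |u a - u b| := by
      have := (hu a).le; have := hu b
      have : 0 < l / |u a - u b| := div_pos hl (by rw [habs]; exact hΔ)
      have := hu a; have := hu b; linarith
    have hP : 0 < l + (u a ^ 2 - u b ^ 2) := by nlinarith [hu a, hu b]
    simp only [defer, Finset.sum_pair hne, h1, h2, habs]
    rw [← add_div]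
    rw [habs] at hD
    have hD' : (u a + u b) * (u a - u b) + l ≠ 0 := by nlinarith
    field_simp [hΔ.ne', hP.ne', hD.ne']
    ring
  intro a b c d hab hcd
  rw [key a b hab, key c d hcd]
  have hP : 0 < l + (u a ^ 2 - u b ^ 2) := by nlinarith [hu a, hu b]
  have hQ : 0 < l + (u c ^ 2 - u d ^ 2) := by nlinarith [hu c, hu d]
  have hiff : l / (l + (u a ^ 2 - u b ^ 2)) < l / (l + (u c ^ 2 - u d ^ 2)) ↔
      u c ^ 2 - u d ^ 2 < u a ^ 2 - u b ^ 2 := by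
    rw [div_lt_div_iff₀ hP hQ]
    constructor <;> intro hh <;> nlinarith
  refine ⟨hiff, ?_, ?_⟩
  · rintro ⟨h1, h2⟩
    rw [hiff]
    nlinarith [hu a, hu b, hu c, hu d]
  · rintro ⟨h1, h2⟩
    rw [hiff]
    nlinarith [hu a, hu b, hu c, hu d]
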